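/- If a 4-gon z₁,z₂,z₃,z₄ ∈ ℍ is maximal (no 4-gon with the same sidelengths has strictly larger signed area), then the four points are either cocyclic or collinear. -/

import Mathlib

set_option maxHeartbeats 1600000


open Real Finset

noncomputable section

/-- Points of `ℝ³`. -/
abbrev V3 : Type := Fin 3 → ℝ

/-- The pseudo-Euclidean scalar product `⟨x,y⟩ = x₀y₀ − x₁y₁ − x₂y₂`. -/
def pscal (x y : V3) : ℝ := x 0 * y 0 - x 1 * y 1 - x 2 * y 2

/-- The hyperboloid model `ℍ` of the hyperbolic plane. -/
def Hyp : Set V3 := {x | pscal x x = 1 ∧ 0 < x 0}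

/-- Inverse hyperbolic cosine. -/
def arcoshR (x : ℝ) : ℝ := Real.log (x + Real.sqrt (x ^ 2 - 1))

/-- Hyperbolic distance `d(a,b) = arcosh ⟨a,b⟩`. -/
def dH (a b : V3) : ℝ := arcoshR (pscal a b)

/-- Determinant of the 3×3 matrix with columns `a`, `b`, `c`. -/
def det3 (a b c : V3) : ℝ :=
  a 0 * (b 1 * c 2 - b 2 * c 1) - b 0 * (a 1 * c 2 - a 2 * c 1) + c 0 * (a 1 * b 2 - a 2 * b 1)

/-- `S_ab = sinh(d(a,b)/2)`. -/
def SS (a b : V3) : ℝ := Real.sinh (dH a b / 2)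

/-- Signed area of the triangle `a b c`. -/
def triArea (a b c : V3) : ℝ :=
  2 * Real.arctan (det3 a b c / (pscal a b + pscal b c + pscal c a + 1))

/-- Signed area of the `n`-gon with vertices `z 1, …, z n`. -/
def polyArea (n : ℕ) (z : ℕ → V3) : ℝ :=
  ∑ k ∈ Finset.Ico 2 n, triArea (z 1) (z k) (z (k + 1))

/-- Cyclic successor on `{1, …, n}`. -/
def nxt (n k : ℕ) : ℕ := k % n + 1

/-- Oriented convexity of the `n`-gon `z 1, …, z n`. -/
def OrientedConvex (n : ℕ) (z : ℕ → V3) : Prop :=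
  ∀ k ∈ Finset.Icc 1 n, ∀ j ∈ Finset.Icc 1 n,
    j ≠ k → j ≠ nxt n k → 0 < det3 (z k) (z (nxt n k)) (z j)

/-- A set of points lies in a common 2-dimensional linear subspace of `ℝ³`. -/
def Collin (s : Set V3) : Prop :=
  ∃ W : Submodule ℝ V3, Module.finrank ℝ W = 2 ∧ ∀ x ∈ s, x ∈ W

/-- A set of points lies in a common affine plane of `ℝ³` not containing the origin. -/
def Cocyc (s : Set V3) : Prop :=
  ∃ u : V3, ∃ p : ℝ, u ≠ 0 ∧ p ≠ 0 ∧ ∀ x ∈ s, pscal u x = p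

lemma pscal_comm (x y : V3) : pscal x y = pscal y x := by unfold pscal; ring

lemma one_le_pscal {x y : V3} (hx : x ∈ Hyp) (hy : y ∈ Hyp) : 1 ≤ pscal x y := by
  obtain ⟨hx1, hx0⟩ := hx
  obtain ⟨hy1, hy0⟩ := hy
  unfold pscal at *
  nlinarith [sq_nonneg (x 1 - y 1), sq_nonneg (x 2 - y 2), sq_nonneg (x 1 * y 2 - x 2 * y 1),
    mul_pos hx0 hy0, sq_nonneg (x 0 * y 0 + 1 + x 1 * y 1 + x 2 * y 2),
    sq_nonneg (x 0 * y 0 - 1 - x 1 * y 1 - x 2 * y 2)]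

lemma eq_of_pscal_eq_one {x y : V3} (hx : x ∈ Hyp) (hy : y ∈ Hyp) (h : pscal x y = 1) : x = y := by
  obtain ⟨hx1, hx0⟩ := hx
  obtain ⟨hy1, hy0⟩ := hy
  unfold pscal at *
  have h1 : x 1 = y 1 := by
    nlinarith [sq_nonneg (x 1 - y 1), sq_nonneg (x 2 - y 2), sq_nonneg (x 1 * y 2 - x 2 * y 1),
      mul_pos hx0 hy0]
  have h2 : x 2 = y 2 := by
    nlinarith [sq_nonneg (x 1 - y 1), sq_nonneg (x 2 - y 2), sq_nonneg (x 1 * y 2 - x 2 * y 1),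
      mul_pos hx0 hy0]
  have h0 : x 0 = y 0 := by nlinarith
  funext i; fin_cases i <;> assumption

lemma arcoshR_strict {p q : ℝ} (hp : 1 ≤ p) (hpq : p < q) : arcoshR p < arcoshR q := by
  unfold arcoshR
  have h1 : (0:ℝ) < p + Real.sqrt (p ^ 2 - 1) := by positivity
  apply Real.log_lt_log h1
  have : Real.sqrt (p ^ 2 - 1) ≤ Real.sqrt (q ^ 2 - 1) := by
    apply Real.sqrt_le_sqrt; nlinarith
  linarith

lemma pscal_eq_of_dH_eq {p q : ℝ} (hp : 1 ≤ p) (hq : 1 ≤ q) (h : arcoshR p = arcoshR q) :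
    p = q := by
  rcases lt_trichotomy p q with h' | h' | h'
  · exact absurd h (ne_of_lt (arcoshR_strict hp h'))
  · exact h'
  · exact absurd h.symm (ne_of_lt (arcoshR_strict hq h'))

lemma arcoshR_one : arcoshR 1 = 0 := by
  unfold arcoshR; norm_num

lemma pscal_gt_one {x y : V3} (hx : x ∈ Hyp) (hy : y ∈ Hyp) (h : 0 < dH x y) :
    1 < pscal x y := by
  rcases eq_or_lt_of_le (one_le_pscal hx hy) with he | hl
  · exfalso; unfold dH at h; rw [← he, arcoshR_one] at h; exact lt_irrefl 0 h
  · exact hl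


lemma sum_sq_pos_of_ne_zero {u : V3} (hu : u ≠ 0) : 0 < u 0 ^ 2 + u 1 ^ 2 + u 2 ^ 2 := by
  rcases lt_or_ge 0 (u 0 ^ 2 + u 1 ^ 2 + u 2 ^ 2) with h | h
  · exact h
  · exfalso; apply hu
    have h0 : u 0 = 0 := by nlinarith [sq_nonneg (u 0), sq_nonneg (u 1), sq_nonneg (u 2)]
    have h1 : u 1 = 0 := by nlinarith [sq_nonneg (u 0), sq_nonneg (u 1), sq_nonneg (u 2)]
    have h2 : u 2 = 0 := by nlinarith [sq_nonneg (u 0), sq_nonneg (u 1), sq_nonneg (u 2)]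
    funext i; fin_cases i <;> simpa

/-- from a nonzero `u` and `p = 0` on points: Collin; from `p ≠ 0`: Cocyc. -/
lemma collin_of_pscal_zero (s : Set V3) (u : V3) (hu : u ≠ 0)
    (h : ∀ x ∈ s, pscal u x = 0) : Collin s := by
  classical
  let ℓ : V3 →ₗ[ℝ] ℝ :=
    { toFun := fun x => pscal u x
      map_add' := by intro x y; unfold pscal; simp [Pi.add_apply]; ring
      map_smul' := by intro c x; unfold pscal; simp [Pi.smul_apply, smul_eq_mul]; ring }
  refine ⟨LinearMap.ker ℓ, ?_, fun x hx => ?_⟩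
  · have hr := LinearMap.finrank_range_add_finrank_ker ℓ
    have hV : Module.finrank ℝ V3 = 3 := by simp [Module.finrank_fin_fun]
    have hle : Module.finrank ℝ (LinearMap.range ℓ) ≤ 1 := by
      simpa using Submodule.finrank_le (LinearMap.range ℓ)
    have hpos : 0 < Module.finrank ℝ (LinearMap.range ℓ) := by
      have hval : ℓ ![u 0, -u 1, -u 2] = u 0 ^ 2 + u 1 ^ 2 + u 2 ^ 2 := by
        show pscal u _ = _
        unfold pscal; simp; ring
      have hp := sum_sq_pos_of_ne_zero hu
      have hnt : Nontrivial (LinearMap.range ℓ) := by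
        refine ⟨⟨⟨ℓ ![u 0, -u 1, -u 2], LinearMap.mem_range_self _ _⟩, 0, ?_⟩⟩
        intro hcon
        rw [Submodule.mk_eq_zero] at hcon
        rw [hcon] at hval; exact absurd hval.symm (ne_of_gt hp)
      exact Module.finrank_pos_iff.mpr hnt
    omega
  · exact LinearMap.mem_ker.mpr (h x hx)

lemma partA (z : ℕ → V3)
    (h : det3 (z 2) (z 3) (z 4) - det3 (z 1) (z 3) (z 4) + det3 (z 1) (z 2) (z 4)
        - det3 (z 1) (z 2) (z 3) = 0) :
    Cocyc {z 1, z 2, z 3, z 4} ∨ Collin {z 1, z 2, z 3, z 4} := by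
  classical
  set M : Matrix (Fin 4) (Fin 4) ℝ := Matrix.of
    ![![z 1 0, -(z 1 1), -(z 1 2), -1],
      ![z 2 0, -(z 2 1), -(z 2 2), -1],
      ![z 3 0, -(z 3 1), -(z 3 2), -1],
      ![z 4 0, -(z 4 1), -(z 4 2), -1]] with hM
  have hMdet : M.det = 0 := by
    have e : M.det = det3 (z 2) (z 3) (z 4) - det3 (z 1) (z 3) (z 4) + det3 (z 1) (z 2) (z 4)
        - det3 (z 1) (z 2) (z 3) := by
      rw [hM]
      simp [Matrix.det_succ_row_zero, Fin.sum_univ_succ, det3, Fin.succAbove]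
      ring
    rw [e, h]
  obtain ⟨v, hv0, hv⟩ := (Matrix.exists_mulVec_eq_zero_iff).mpr hMdet
  set u : V3 := ![v 0, v 1, v 2] with hu
  set p : ℝ := v 3 with hp
  have E : ∀ k ∈ Finset.Icc 1 4, pscal u (z k) = p := by
    intro k hk
    fin_cases hk
    · have hh := congrFun hv 0
      simp [hM, Matrix.mulVec, dotProduct, Fin.sum_univ_succ,
        show (Fin.succ 2 : Fin 4) = 3 from rfl] at hh
      show pscal u (z 1) = p
      unfold pscal; rw [hu, hp]; simp; linarith [hh]
    · have hh := congrFun hv 1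
      simp [hM, Matrix.mulVec, dotProduct, Fin.sum_univ_succ,
        show (Fin.succ 2 : Fin 4) = 3 from rfl] at hh
      show pscal u (z 2) = p
      unfold pscal; rw [hu, hp]; simp; linarith [hh]
    · have hh := congrFun hv 2
      simp [hM, Matrix.mulVec, dotProduct, Fin.sum_univ_succ,
        show (Fin.succ 2 : Fin 4) = 3 from rfl] at hh
      show pscal u (z 3) = p
      unfold pscal; rw [hu, hp]; simp; linarith [hh]
    · have hh := congrFun hv 3
      simp [hM, Matrix.mulVec, dotProduct, Fin.sum_univ_succ,
        show (Fin.succ 2 : Fin 4) = 3 from rfl] at hh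
      show pscal u (z 4) = p
      unfold pscal; rw [hu, hp]; simp; linarith [hh]
  have E' : ∀ x ∈ ({z 1, z 2, z 3, z 4} : Set V3), pscal u x = p := by
    intro x hx
    rcases hx with h1 | h2 | h3 | h4
    · rw [h1]; exact E 1 (by decide)
    · rw [h2]; exact E 2 (by decide)
    · rw [h3]; exact E 3 (by decide)
    · rw [Set.mem_singleton_iff] at h4; rw [h4]; exact E 4 (by decide)
  have hune : u ≠ 0 := by
    intro hz
    have h1 := E 1 (by decide)
    rw [hz] at h1
    have hp0 : p = 0 := by
      rw [← h1]; unfold pscal; simp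
    apply hv0
    funext i
    fin_cases i
    · have : u 0 = 0 := by rw [hz]; rfl
      simpa [hu] using this
    · have : u 1 = 0 := by rw [hz]; rfl
      simpa [hu] using this
    · have : u 2 = 0 := by rw [hz]; rfl
      simpa [hu] using this
    · simpa [hp] using hp0
  by_cases hpz : p = 0
  · right
    exact collin_of_pscal_zero _ u hune (by intro x hx; rw [E' x hx, hpz])
  · left
    exact ⟨u, p, hune, hpz, E'⟩

def Qg (a b t : ℝ) : ℝ := 1 + 2*a*b*t - a^2 - b^2 - t^2

def wcfg (a b c d t : ℝ) : ℕ → V3 := fun k =>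
  if k = 1 then ![1, 0, 0]
  else if k = 2 then
    ![a, (t*a - b)/Real.sqrt (t^2-1), -(Real.sqrt (Qg a b t))/Real.sqrt (t^2-1)]
  else if k = 3 then ![t, Real.sqrt (t^2-1), 0]
  else ![d, (t*d - c)/Real.sqrt (t^2-1), Real.sqrt (Qg c d t)/Real.sqrt (t^2-1)]

lemma wcfg_spec (a b c d t : ℝ) (ha : 1 < a) (hb : 1 < b) (hc : 1 < c) (hd : 1 < d)
    (ht : 1 < t) (h1 : 0 ≤ Qg a b t) (h2 : 0 ≤ Qg c d t) :
    (∀ k ∈ Finset.Icc 1 4, wcfg a b c d t k ∈ Hyp) ∧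
    pscal (wcfg a b c d t 1) (wcfg a b c d t 2) = a ∧
    pscal (wcfg a b c d t 2) (wcfg a b c d t 3) = b ∧
    pscal (wcfg a b c d t 3) (wcfg a b c d t 4) = c ∧
    pscal (wcfg a b c d t 4) (wcfg a b c d t 1) = d ∧
    polyArea 4 (wcfg a b c d t) =
      2 * Real.arctan (Real.sqrt (Qg a b t) / (a + b + t + 1)) +
      2 * Real.arctan (Real.sqrt (Qg c d t) / (t + c + d + 1)) := by
  have hs0 : (0:ℝ) < t^2 - 1 := by nlinarith
  have hs : 0 < Real.sqrt (t^2-1) := Real.sqrt_pos.mpr hs0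
  have hs2 : Real.sqrt (t^2-1) ^ 2 = t^2 - 1 := Real.sq_sqrt (le_of_lt hs0)
  have hq1 : Real.sqrt (Qg a b t) ^ 2 = Qg a b t := Real.sq_sqrt h1
  have hq2 : Real.sqrt (Qg c d t) ^ 2 = Qg c d t := Real.sq_sqrt h2
  have e1 : wcfg a b c d t 1 = ![1, 0, 0] := rfl
  have e2 : wcfg a b c d t 2 =
      ![a, (t*a - b)/Real.sqrt (t^2-1), -(Real.sqrt (Qg a b t))/Real.sqrt (t^2-1)] := rfl
  have e3 : wcfg a b c d t 3 = ![t, Real.sqrt (t^2-1), 0] := rfl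
  have e4 : wcfg a b c d t 4 =
      ![d, (t*d - c)/Real.sqrt (t^2-1), Real.sqrt (Qg c d t)/Real.sqrt (t^2-1)] := rfl
  have p12 : pscal (wcfg a b c d t 1) (wcfg a b c d t 2) = a := by
    unfold pscal; rw [e1, e2]; simp
  have p23 : pscal (wcfg a b c d t 2) (wcfg a b c d t 3) = b := by
    unfold pscal; rw [e2, e3]; simp
    field_simp
    ring
  have p34 : pscal (wcfg a b c d t 3) (wcfg a b c d t 4) = c := by
    unfold pscal; rw [e3, e4]; simp
    field_simp
    ring
  have p41 : pscal (wcfg a b c d t 4) (wcfg a b c d t 1) = d := by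
    unfold pscal; rw [e4, e1]; simp
  have p13 : pscal (wcfg a b c d t 1) (wcfg a b c d t 3) = t := by
    unfold pscal; rw [e1, e3]; simp
  have p31 : pscal (wcfg a b c d t 3) (wcfg a b c d t 1) = t := by
    unfold pscal; rw [e3, e1]; simp
  have n1 : pscal (wcfg a b c d t 1) (wcfg a b c d t 1) = 1 := by
    unfold pscal; rw [e1]; simp
  have n2 : pscal (wcfg a b c d t 2) (wcfg a b c d t 2) = 1 := by
    unfold pscal; rw [e2]; simp
    field_simp
    unfold Qg at hq1 ⊢
    linear_combination (a^2 - 1) * hs2 - hq1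
  have n3 : pscal (wcfg a b c d t 3) (wcfg a b c d t 3) = 1 := by
    unfold pscal; rw [e3]; simp
    have := Real.mul_self_sqrt (le_of_lt hs0)
    linarith
  have n4 : pscal (wcfg a b c d t 4) (wcfg a b c d t 4) = 1 := by
    unfold pscal; rw [e4]; simp
    field_simp
    unfold Qg at hq2 ⊢
    linear_combination (d^2 - 1) * hs2 - hq2
  have d123 : det3 (wcfg a b c d t 1) (wcfg a b c d t 2) (wcfg a b c d t 3)
      = Real.sqrt (Qg a b t) := by
    unfold det3; rw [e1, e2, e3]; simp
    field_simp
  have d134 : det3 (wcfg a b c d t 1) (wcfg a b c d t 3) (wcfg a b c d t 4)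
      = Real.sqrt (Qg c d t) := by
    unfold det3; rw [e1, e3, e4]; simp
    field_simp
  refine ⟨?_, p12, p23, p34, p41, ?_⟩
  · intro k hk
    fin_cases hk
    · exact ⟨n1, by rw [e1]; norm_num⟩
    · refine ⟨n2, ?_⟩; rw [e2]; show (0:ℝ) < a; linarith
    · refine ⟨n3, ?_⟩; rw [e3]; show (0:ℝ) < t; linarith
    · refine ⟨n4, ?_⟩; rw [e4]; show (0:ℝ) < d; linarith
  · unfold polyArea
    rw [show (4:ℕ) = 3 + 1 from rfl, Finset.sum_Ico_succ_top (by norm_num),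
      Finset.sum_Ico_succ_top (by norm_num), Finset.Ico_self, Finset.sum_empty]
    unfold triArea
    rw [d123, d134, p12, p23, p31, p13, p34, p41]
    norm_num

lemma det3_sq (x y w : V3) (hx : pscal x x = 1) (hy : pscal y y = 1) (hw : pscal w w = 1) :
    det3 x y w ^ 2 = Qg (pscal x y) (pscal y w) (pscal x w) := by
  unfold Qg
  unfold det3 pscal at *
  linear_combination (((y 0)^2 - (y 1)^2 - (y 2)^2) * ((w 0)^2 - (w 1)^2 - (w 2)^2)
      - (y 0 * w 0 - y 1 * w 1 - y 2 * w 2)^2) * hx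
    + (((w 0)^2 - (w 1)^2 - (w 2)^2) - (x 0 * w 0 - x 1 * w 1 - x 2 * w 2)^2) * hy
    + (1 - (x 0 * y 0 - x 1 * y 1 - x 2 * y 2)^2) * hw

lemma key_det (z1 z2 z3 z4 : V3) (h1 : pscal z1 z1 = 1) (h3 : pscal z3 z3 = 1) :
    (1 + pscal z1 z3) * (det3 z2 z3 z4 - det3 z1 z3 z4 + det3 z1 z2 z4 - det3 z1 z2 z3)
    = (pscal z1 z2 + pscal z2 z3 - 1 - pscal z1 z3) * det3 z1 z3 z4
    + (pscal z3 z4 + pscal z4 z1 - 1 - pscal z1 z3) * det3 z1 z2 z3 := by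
  unfold det3 pscal at *
  linear_combination (- (z2 0 * (z3 1 * z4 2 - z3 2 * z4 1) - z3 0 * (z2 1 * z4 2 - z2 2 * z4 1)
      + z4 0 * (z2 1 * z3 2 - z2 2 * z3 1))) * h1
    + (- (z1 0 * (z2 1 * z4 2 - z2 2 * z4 1) - z2 0 * (z1 1 * z4 2 - z1 2 * z4 1)
      + z4 0 * (z1 1 * z2 2 - z1 2 * z2 1))) * h3

lemma arctan_ge_half {y : ℝ} (h0 : 0 ≤ y) (h1 : y ≤ 1) : y / 2 ≤ Real.arctan y := by
  rcases eq_or_lt_of_le h0 with he | hy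
  · rw [← he]; simp
  obtain ⟨c, hc, hslope⟩ := exists_hasDerivAt_eq_slope Real.arctan (fun x => 1/(1+x^2)) hy
    (Real.continuous_arctan.continuousOn) (fun x _ => Real.hasDerivAt_arctan x)
  rw [Real.arctan_zero, sub_zero, sub_zero] at hslope
  have hc2 : c^2 ≤ 1 := by
    rcases hc with ⟨hc1, hc2⟩
    nlinarith
  have h12 : (1:ℝ)/2 ≤ 1/(1+c^2) := by
    rw [div_le_div_iff₀ (by norm_num) (by positivity)]
    linarith
  have : Real.arctan y / y = 1/(1+c^2) := by rw [← hslope]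
  have h2 : 1/2 ≤ Real.arctan y / y := by rw [this]; exact h12
  rw [le_div_iff₀ hy] at h2
  linarith


lemma Qg_hasDerivAt (c d t0 : ℝ) : HasDerivAt (fun t => Qg c d t) (2*c*d - 2*t0) t0 := by
  unfold Qg
  have hlin : HasDerivAt (fun t : ℝ => 2*c*d*t) (2*c*d) t0 := by
    simpa using (hasDerivAt_id t0).const_mul (2*c*d)
  have hsq : HasDerivAt (fun t : ℝ => t^2) (2*t0) t0 := by
    simpa using hasDerivAt_pow 2 t0
  exact (((hlin.const_add 1).sub_const (c^2)).sub_const (d^2)).sub hsq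

lemma T2_hasDerivAt (c d t0 : ℝ) (hQ2 : 0 < Qg c d t0) (hden : 0 < t0 + c + d + 1) :
    HasDerivAt (fun t => 2 * Real.arctan (Real.sqrt (Qg c d t) / (t + c + d + 1)))
      (2 * ((1 / (1 + (Real.sqrt (Qg c d t0) / (t0 + c + d + 1))^2)) *
        ((1 / (2 * Real.sqrt (Qg c d t0)) * (2*c*d - 2*t0) * (t0 + c + d + 1)
          - Real.sqrt (Qg c d t0) * 1) / (t0 + c + d + 1)^2))) t0 := by
  have hsqrt : HasDerivAt (fun t => Real.sqrt (Qg c d t))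
      (1 / (2 * Real.sqrt (Qg c d t0)) * (2*c*d - 2*t0)) t0 :=
    (Real.hasDerivAt_sqrt (ne_of_gt hQ2)).comp t0 (Qg_hasDerivAt c d t0)
  have hd : HasDerivAt (fun t : ℝ => t + c + d + 1) 1 t0 := by
    simpa using (((hasDerivAt_id t0).add_const c).add_const d).add_const 1
  have hdiv := hsqrt.div hd (ne_of_gt hden)
  have harc := (Real.hasDerivAt_arctan (Real.sqrt (Qg c d t0) / (t0 + c + d + 1))).comp t0 hdiv
  exact harc.const_mul 2

lemma boundary_not_max (a b c d t0 : ℝ) (ha : 1 < a) (hb : 1 < b) (hc : 1 < c) (hd : 1 < d)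
    (ht : 1 < t0) (hQ1 : Qg a b t0 = 0) (hQ2 : 0 < Qg c d t0)
    (hle : ∀ t, 1 < t → 0 ≤ Qg a b t → 0 ≤ Qg c d t →
      2*Real.arctan (Real.sqrt (Qg a b t)/(a+b+t+1)) +
        2*Real.arctan (Real.sqrt (Qg c d t)/(t+c+d+1))
      ≤ 2*Real.arctan (Real.sqrt (Qg c d t0)/(t0+c+d+1))) : False := by
  have hab2 : (0:ℝ) < (a^2-1)*(b^2-1) := mul_pos (by nlinarith) (by nlinarith)
  obtain ⟨R, hRpos, hRsq⟩ : ∃ R : ℝ, 0 < R ∧ R^2 = (a^2-1)*(b^2-1) :=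
    ⟨Real.sqrt ((a^2-1)*(b^2-1)), Real.sqrt_pos.mpr hab2, Real.sq_sqrt hab2.le⟩
  have htab : (t0 - a*b)^2 = R^2 := by rw [hRsq]; unfold Qg at hQ1; nlinarith
  have habs : |t0 - a*b| = R := by
    rw [← Real.sqrt_sq_eq_abs, htab, Real.sqrt_sq hRpos.le]
  obtain ⟨σ, hσ1, hσR⟩ : ∃ σ : ℝ, (σ = 1 ∨ σ = -1) ∧ t0 - a*b = σ*R := by
    by_cases h : a*b < t0
    · refine ⟨1, Or.inl rfl, ?_⟩
      rw [abs_of_pos (by linarith)] at habs; linarith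
    · refine ⟨-1, Or.inr rfl, ?_⟩
      push_neg at h
      rw [abs_of_nonpos (by linarith)] at habs; linarith
  have hQ1e : ∀ ε : ℝ, Qg a b (t0 - σ*ε) = ε*(2*R-ε) := by
    intro ε
    have hσ2 : σ^2 = 1 := by rcases hσ1 with h | h <;> rw [h] <;> norm_num
    unfold Qg at *
    linear_combination hQ1 + (2*σ*ε)*hσR + (2*R*ε - ε^2)*hσ2
  have hden2 : 0 < t0 + c + d + 1 := by linarith
  obtain ⟨C, hCbound⟩ := ((T2_hasDerivAt c d t0 hQ2 hden2).isBigO_sub).bound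
  rw [Metric.eventually_nhds_iff] at hCbound
  obtain ⟨δ, hδ, hCb⟩ := hCbound
  obtain ⟨C', hC'pos, hCC'⟩ : ∃ C' : ℝ, 0 < C' ∧ C ≤ C' := ⟨|C| + 1, by positivity,
    by linarith [le_abs_self C]⟩
  obtain ⟨D0, hD0gt, hD0ge⟩ : ∃ D0 : ℝ, 1 < D0 ∧ D0 = a + b + t0 + R + 1 :=
    ⟨a + b + t0 + R + 1, by linarith, rfl⟩
  obtain ⟨K, hKpos, hKdef⟩ : ∃ K : ℝ, 0 < K ∧ K = 2*c*d + 2*t0 + 1 :=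
    ⟨2*c*d + 2*t0 + 1, by nlinarith, rfl⟩
  obtain ⟨ε, hε, hε1, hε2, hε3, hε4, hε5, hε6⟩ :
      ∃ ε : ℝ, 0 < ε ∧ ε < δ ∧ ε < t0 - 1 ∧ ε ≤ R/2 ∧ ε ≤ Qg c d t0/(2*K) ∧
        ε ≤ 1/(2*R+2) ∧ ε ≤ R/(2*(C'*D0)^2+2) := by
    refine ⟨min (δ/2) (min ((t0-1)/2) (min (R/2) (min (Qg c d t0/(2*K))
      (min (1/(2*R+2)) (R/(2*(C'*D0)^2+2)))))), ?_, ?_, ?_, ?_, ?_, ?_, ?_⟩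
    · refine lt_min (by positivity) (lt_min (by linarith) (lt_min (by positivity)
        (lt_min (by positivity) (lt_min (by positivity) (by positivity)))))
    · exact lt_of_le_of_lt (min_le_left _ _) (by linarith)
    · exact lt_of_le_of_lt (le_trans (min_le_right _ _) (min_le_left _ _)) (by linarith)
    · exact le_trans (min_le_right _ _) (le_trans (min_le_right _ _) (min_le_left _ _))
    · exact le_trans (min_le_right _ _) (le_trans (min_le_right _ _)
        (le_trans (min_le_right _ _) (min_le_left _ _)))
    · exact le_trans (min_le_right _ _) (le_trans (min_le_right _ _)
        (le_trans (min_le_right _ _) (le_trans (min_le_right _ _) (min_le_left _ _))))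
    · exact le_trans (min_le_right _ _) (le_trans (min_le_right _ _)
        (le_trans (min_le_right _ _) (le_trans (min_le_right _ _) (min_le_right _ _))))
  have hεle1 : ε ≤ 1 := by
    have h2 : 1/(2*R+2) ≤ 1 := by rw [div_le_one (by linarith)]; linarith
    linarith
  have hσε : |σ*ε| = ε := by
    rcases hσ1 with h | h <;> rw [h] <;>
      simp [abs_of_pos hε]
  have ht1gt : 1 < t0 - σ*ε := by
    have h1 : σ*ε ≤ ε := le_trans (le_abs_self _) (le_of_eq hσε)
    linarith
  have hQ1t1 : Qg a b (t0 - σ*ε) = ε*(2*R-ε) := hQ1e ε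
  have hQ1t1' : 0 ≤ Qg a b (t0 - σ*ε) := by rw [hQ1t1]; nlinarith
  have hQ2t1 : Qg c d t0 - K*ε ≤ Qg c d (t0 - σ*ε) := by
    have hline : Qg c d (t0 - σ*ε) = Qg c d t0 + σ*ε*(2*t0 - 2*c*d) - (σ*ε)^2 := by
      unfold Qg; ring
    have hcd : 0 < c*d := by nlinarith
    rw [hline, hKdef]
    rcases hσ1 with h | h <;> subst h <;> nlinarith [hεle1, hε.le, hcd, ht]
  have hQ2t1' : 0 < Qg c d (t0 - σ*ε) := by
    have h2 : K*ε ≤ Qg c d t0 / 2 := by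
      have := (le_div_iff₀ (by positivity : (0:ℝ) < 2*K)).mp hε4
      calc K*ε = ε*K := by ring
        _ ≤ Qg c d t0/(2*K)*K := by
            exact mul_le_mul_of_nonneg_right hε4 hKpos.le
        _ = Qg c d t0 / 2 := by field_simp
    linarith
  -- bound on the second term
  have hT2b : |2 * Real.arctan (Real.sqrt (Qg c d (t0 - σ*ε)) / ((t0 - σ*ε) + c + d + 1))
      - 2 * Real.arctan (Real.sqrt (Qg c d t0) / (t0 + c + d + 1))| ≤ C' * ε := by
    have hdist : dist (t0 - σ*ε) t0 < δ := by
      rw [Real.dist_eq, show t0 - σ*ε - t0 = -(σ*ε) by ring, abs_neg, hσε]; exact hε1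
    have hb := hCb hdist
    simp only [Real.norm_eq_abs] at hb
    have : |t0 - σ*ε - t0| = ε := by rw [show t0 - σ*ε - t0 = -(σ*ε) by ring, abs_neg, hσε]
    rw [this] at hb
    calc |_| ≤ C * ε := hb
      _ ≤ C' * ε := mul_le_mul_of_nonneg_right hCC' hε.le
  -- lower bound on first term
  have harg_lb : Real.sqrt (ε*R) / D0 ≤ Real.sqrt (Qg a b (t0 - σ*ε)) / (a+b+(t0-σ*ε)+1) := by
    apply div_le_div₀ (Real.sqrt_nonneg _)
    · rw [hQ1t1]; apply Real.sqrt_le_sqrt; nlinarith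
    · have h1 : σ*ε ≤ ε := le_trans (le_abs_self _) (le_of_eq hσε)
      linarith
    · have h1 : -(σ*ε) ≤ ε := le_trans (neg_le_abs _) (le_of_eq hσε)
      rw [hD0ge]; linarith
  have harg_ub : Real.sqrt (Qg a b (t0 - σ*ε)) / (a+b+(t0-σ*ε)+1) ≤ 1 := by
    have h1 : Real.sqrt (Qg a b (t0 - σ*ε)) ≤ 1 := by
      rw [hQ1t1]
      rw [show (1:ℝ) = Real.sqrt 1 by simp]
      apply Real.sqrt_le_sqrt
      have := (le_div_iff₀ (by linarith : (0:ℝ) < 2*R+2)).mp hε5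
      nlinarith
    have h2 : 1 ≤ a+b+(t0-σ*ε)+1 := by linarith
    calc Real.sqrt (Qg a b (t0 - σ*ε)) / (a+b+(t0-σ*ε)+1) ≤ Real.sqrt (Qg a b (t0-σ*ε)) / 1 :=
          div_le_div_of_nonneg_left (Real.sqrt_nonneg _) (by norm_num) h2 |>.trans (le_of_eq rfl)
      _ ≤ 1 := by rw [div_one]; exact h1
  have hkey : C' * ε < Real.sqrt (ε*R) / D0 := by
    rw [lt_div_iff₀ (by linarith)]
    have h0 : 0 ≤ C' * ε * D0 := by positivity
    rw [show C' * ε * D0 = C'*D0*ε by ring]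
    rw [Real.lt_sqrt (by positivity)]
    have h6 := (le_div_iff₀ (by positivity : (0:ℝ) < 2*(C'*D0)^2+2)).mp hε6
    have hXR : (C'*D0)^2 * ε < R := by nlinarith [hε]
    calc (C'*D0*ε)^2 = ((C'*D0)^2*ε)*ε := by ring
      _ < R*ε := mul_lt_mul_of_pos_right hXR hε
      _ = ε*R := by ring
  -- assemble
  have harct := arctan_ge_half (by positivity) harg_ub
  have hfinal := hle (t0 - σ*ε) ht1gt hQ1t1' hQ2t1'.le
  have habs2 := abs_le.mp hT2b
  have : Real.sqrt (ε*R)/D0 ≤ 2 * Real.arctan (Real.sqrt (Qg a b (t0-σ*ε)) / (a+b+(t0-σ*ε)+1)) := by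
    have hmono : Real.arctan (Real.sqrt (ε*R)/D0) ≤
        Real.arctan (Real.sqrt (Qg a b (t0-σ*ε)) / (a+b+(t0-σ*ε)+1)) :=
      Real.arctan_strictMono.monotone harg_lb
    have h2 := arctan_ge_half (show (0:ℝ) ≤ Real.sqrt (ε*R)/D0 by positivity)
      (le_trans harg_lb harg_ub)
    linarith
  linarith [habs2.1, hfinal, hkey, this]

lemma T1_hasDerivAt (a b t0 : ℝ) (hQ1 : 0 < Qg a b t0) (hden : 0 < a + b + t0 + 1) :
    HasDerivAt (fun t => 2 * Real.arctan (Real.sqrt (Qg a b t) / (a + b + t + 1)))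
      (2 * ((1 / (1 + (Real.sqrt (Qg a b t0) / (a + b + t0 + 1))^2)) *
        ((1 / (2 * Real.sqrt (Qg a b t0)) * (2*a*b - 2*t0) * (a + b + t0 + 1)
          - Real.sqrt (Qg a b t0) * 1) / (a + b + t0 + 1)^2))) t0 := by
  have hsqrt : HasDerivAt (fun t => Real.sqrt (Qg a b t))
      (1 / (2 * Real.sqrt (Qg a b t0)) * (2*a*b - 2*t0)) t0 :=
    (Real.hasDerivAt_sqrt (ne_of_gt hQ1)).comp t0 (Qg_hasDerivAt a b t0)
  have hd : HasDerivAt (fun t : ℝ => a + b + t + 1) 1 t0 := by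
    have h0 : HasDerivAt (fun t : ℝ => t) 1 t0 := hasDerivAt_id t0
    simpa using (h0.const_add (a+b)).add_const 1
  have hdiv := hsqrt.div hd (ne_of_gt hden)
  have harc := (Real.hasDerivAt_arctan (Real.sqrt (Qg a b t0) / (a + b + t0 + 1))).comp t0 hdiv
  exact harc.const_mul 2

lemma L1form (a b t0 p : ℝ) (ha : 1 < a) (hb : 1 < b) (ht : 1 < t0) (hp : 0 < p)
    (hpsq : p^2 = 1+2*a*b*t0-a^2-b^2-t0^2) :
    2 * ((1 / (1 + (p / (a+b+t0+1))^2)) *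
      ((1/(2*p)*(2*a*b-2*t0)*(a+b+t0+1) - p*1)/(a+b+t0+1)^2))
    = (a+b-1-t0)/((1+t0)*p) := by
  have hden : (0:ℝ) < a+b+t0+1 := by linarith
  have key : 1 + (p/(a+b+t0+1))^2 = 2*(1+a)*(1+b)*(1+t0)/(a+b+t0+1)^2 := by
    field_simp
    linear_combination hpsq
  have e1 : 1/(2*p)*(2*a*b-2*t0)*(a+b+t0+1) - p*1
      = ((a*b-t0)*(a+b+t0+1) - p^2)/p := by
    field_simp
  have e2 : (a*b-t0)*(a+b+t0+1) - p^2 = (1+a)*(1+b)*(a+b-1-t0) := by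
    linear_combination -hpsq
  rw [key, e1, e2]
  have h2 : (0:ℝ) < 2*(1+a)*(1+b)*(1+t0) := by positivity
  field_simp

lemma L2form (c d t0 q : ℝ) (hc : 1 < c) (hd : 1 < d) (ht : 1 < t0) (hq : 0 < q)
    (hqsq : q^2 = 1+2*c*d*t0-c^2-d^2-t0^2) :
    2 * ((1 / (1 + (q / (t0+c+d+1))^2)) *
      ((1/(2*q)*(2*c*d-2*t0)*(t0+c+d+1) - q*1)/(t0+c+d+1)^2))
    = (c+d-1-t0)/((1+t0)*q) := by
  have hden : (0:ℝ) < t0+c+d+1 := by linarith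
  have key : 1 + (q/(t0+c+d+1))^2 = 2*(1+c)*(1+d)*(1+t0)/(t0+c+d+1)^2 := by
    field_simp
    linear_combination hqsq
  have e1 : 1/(2*q)*(2*c*d-2*t0)*(t0+c+d+1) - q*1
      = ((c*d-t0)*(t0+c+d+1) - q^2)/q := by
    field_simp
  have e2 : (c*d-t0)*(t0+c+d+1) - q^2 = (1+c)*(1+d)*(c+d-1-t0) := by
    linear_combination -hqsq
  rw [key, e1, e2]
  have h2 : (0:ℝ) < 2*(1+c)*(1+d)*(1+t0) := by positivity
  field_simp

lemma interior_crit (a b c d t0 : ℝ) (ha : 1 < a) (hb : 1 < b) (hc : 1 < c) (hd : 1 < d)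
    (ht : 1 < t0) (hQ1 : 0 < Qg a b t0) (hQ2 : 0 < Qg c d t0)
    (hle : ∀ t, 1 < t → 0 ≤ Qg a b t → 0 ≤ Qg c d t →
      2*Real.arctan (Real.sqrt (Qg a b t)/(a+b+t+1)) +
        2*Real.arctan (Real.sqrt (Qg c d t)/(t+c+d+1))
      ≤ 2*Real.arctan (Real.sqrt (Qg a b t0)/(a+b+t0+1)) +
        2*Real.arctan (Real.sqrt (Qg c d t0)/(t0+c+d+1))) :
    (a + b - 1 - t0) * Real.sqrt (Qg c d t0) + (c + d - 1 - t0) * Real.sqrt (Qg a b t0) = 0 := by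
  have hden1 : 0 < a + b + t0 + 1 := by linarith
  have hden2 : 0 < t0 + c + d + 1 := by linarith
  have hF := (T1_hasDerivAt a b t0 hQ1 hden1).add (T2_hasDerivAt c d t0 hQ2 hden2)
  have hcont1 : Continuous (fun t => Qg a b t) := by unfold Qg; fun_prop
  have hcont2 : Continuous (fun t => Qg c d t) := by unfold Qg; fun_prop
  have hopen : IsOpen {t : ℝ | 1 < t ∧ 0 < Qg a b t ∧ 0 < Qg c d t} := by
    apply IsOpen.inter (isOpen_lt continuous_const continuous_id)
    exact IsOpen.inter (isOpen_lt continuous_const hcont1) (isOpen_lt continuous_const hcont2)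
  have hmem : {t : ℝ | 1 < t ∧ 0 < Qg a b t ∧ 0 < Qg c d t} ∈ nhds t0 :=
    hopen.mem_nhds ⟨ht, hQ1, hQ2⟩
  have hloc : IsLocalMax (fun t => 2*Real.arctan (Real.sqrt (Qg a b t)/(a+b+t+1)) +
      2*Real.arctan (Real.sqrt (Qg c d t)/(t+c+d+1))) t0 := by
    apply Filter.eventually_of_mem hmem
    intro t htm
    exact hle t htm.1 htm.2.1.le htm.2.2.le
  have hzero := hloc.hasDerivAt_eq_zero hF
  set p := Real.sqrt (Qg a b t0) with hpdef
  set q := Real.sqrt (Qg c d t0) with hqdef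
  have hp : 0 < p := Real.sqrt_pos.mpr hQ1
  have hq : 0 < q := Real.sqrt_pos.mpr hQ2
  have hpsq : p^2 = Qg a b t0 := Real.sq_sqrt hQ1.le
  have hqsq : q^2 = Qg c d t0 := Real.sq_sqrt hQ2.le
  unfold Qg at hpsq hqsq
  have h1t : (0:ℝ) < 1 + t0 := by linarith
  rw [L1form a b t0 p ha hb ht hp hpsq, L2form c d t0 q hc hd ht hq hqsq] at hzero
  have hne : ((1+t0)*p) ≠ 0 := by positivity
  have hne2 : ((1+t0)*q) ≠ 0 := by positivity
  field_simp at hzero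
  apply mul_left_cancel₀ (show (1+t0) ≠ 0 by positivity)
  linear_combination (1+t0) * hzero

/-- Lemma 4.5: a maximal 4-gon is cocyclic or collinear. -/
theorem maximal_quadrilateral_cocyclic_or_collinear (z : ℕ → V3)
    (hz : ∀ k ∈ Finset.Icc 1 4, z k ∈ Hyp)
    (hpos : ∀ k ∈ Finset.Icc 1 4, 0 < dH (z k) (z (nxt 4 k)))
    (hmax : ∀ w : ℕ → V3, (∀ k ∈ Finset.Icc 1 4, w k ∈ Hyp) →
      (∀ k ∈ Finset.Icc 1 4, dH (w k) (w (nxt 4 k)) = dH (z k) (z (nxt 4 k))) →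
      polyArea 4 w ≤ polyArea 4 z) :
    Cocyc {z 1, z 2, z 3, z 4} ∨ Collin {z 1, z 2, z 3, z 4} := by
  have hz1 : z 1 ∈ Hyp := hz 1 (by decide)
  have hz2 : z 2 ∈ Hyp := hz 2 (by decide)
  have hz3 : z 3 ∈ Hyp := hz 3 (by decide)
  have hz4 : z 4 ∈ Hyp := hz 4 (by decide)
  set a : ℝ := pscal (z 1) (z 2) with hadef
  set b : ℝ := pscal (z 2) (z 3) with hbdef
  set c : ℝ := pscal (z 3) (z 4) with hcdef
  set d : ℝ := pscal (z 4) (z 1) with hddef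
  set t0 : ℝ := pscal (z 1) (z 3) with ht0def
  have ha : 1 < a := pscal_gt_one hz1 hz2 (by have := hpos 1 (by decide); simpa [nxt] using this)
  have hb : 1 < b := pscal_gt_one hz2 hz3 (by have := hpos 2 (by decide); simpa [nxt] using this)
  have hc : 1 < c := pscal_gt_one hz3 hz4 (by have := hpos 3 (by decide); simpa [nxt] using this)
  have hd : 1 < d := pscal_gt_one hz4 hz1 (by have := hpos 4 (by decide); simpa [nxt] using this)
  have ht0ge : 1 ≤ t0 := one_le_pscal hz1 hz3
  rcases eq_or_lt_of_le ht0ge with ht0eq | ht0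
  · -- degenerate: z 1 = z 3
    have h13 : z 1 = z 3 := eq_of_pscal_eq_one hz1 hz3 ht0eq.symm
    apply partA
    rw [← h13]
    unfold det3
    ring
  · -- nondegenerate diagonal
    have hQ1eq : det3 (z 1) (z 2) (z 3) ^ 2 = Qg a b t0 := det3_sq _ _ _ hz1.1 hz2.1 hz3.1
    have hQ2eq : det3 (z 1) (z 3) (z 4) ^ 2 = Qg c d t0 := by
      have h := det3_sq (z 1) (z 3) (z 4) hz1.1 hz3.1 hz4.1
      rw [pscal_comm (z 1) (z 4)] at h
      rw [h]; unfold Qg; ring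
    have hQ1nn : 0 ≤ Qg a b t0 := by rw [← hQ1eq]; positivity
    have hQ2nn : 0 ≤ Qg c d t0 := by rw [← hQ2eq]; positivity
    have hD1 : (0:ℝ) < a + b + t0 + 1 := by linarith
    have hD2 : (0:ℝ) < t0 + c + d + 1 := by linarith
    -- polyArea of z
    have hPA : polyArea 4 z = 2 * Real.arctan (det3 (z 1) (z 2) (z 3) / (a + b + t0 + 1))
        + 2 * Real.arctan (det3 (z 1) (z 3) (z 4) / (t0 + c + d + 1)) := by
      unfold polyArea triArea
      rw [show (4:ℕ) = 3 + 1 from rfl, Finset.sum_Ico_succ_top (by norm_num),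
        Finset.sum_Ico_succ_top (by norm_num), Finset.Ico_self, Finset.sum_empty]
      norm_num
      rw [pscal_comm (z 3) (z 1)]
    -- the competitor family
    have happ : ∀ t, 1 < t → 0 ≤ Qg a b t → 0 ≤ Qg c d t →
        2 * Real.arctan (Real.sqrt (Qg a b t) / (a + b + t + 1))
          + 2 * Real.arctan (Real.sqrt (Qg c d t) / (t + c + d + 1)) ≤ polyArea 4 z := by
      intro t h1 h2 h3
      obtain ⟨hwH, w12, w23, w34, w41, wPA⟩ := wcfg_spec a b c d t ha hb hc hd h1 h2 h3
      have hsides : ∀ k ∈ Finset.Icc 1 4,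
          dH (wcfg a b c d t k) (wcfg a b c d t (nxt 4 k)) = dH (z k) (z (nxt 4 k)) := by
        intro k hk
        fin_cases hk
        · show dH _ (wcfg a b c d t (nxt 4 1)) = dH (z 1) (z (nxt 4 1))
          have : nxt 4 1 = 2 := rfl
          rw [this]; unfold dH; rw [w12]
        · show dH _ (wcfg a b c d t (nxt 4 2)) = dH (z 2) (z (nxt 4 2))
          have : nxt 4 2 = 3 := rfl
          rw [this]; unfold dH; rw [w23]
        · show dH _ (wcfg a b c d t (nxt 4 3)) = dH (z 3) (z (nxt 4 3))
          have : nxt 4 3 = 4 := rfl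
          rw [this]; unfold dH; rw [w34]
        · show dH _ (wcfg a b c d t (nxt 4 4)) = dH (z 4) (z (nxt 4 4))
          have : nxt 4 4 = 1 := rfl
          rw [this]; unfold dH; rw [w41]
      calc 2 * Real.arctan (Real.sqrt (Qg a b t) / (a + b + t + 1))
            + 2 * Real.arctan (Real.sqrt (Qg c d t) / (t + c + d + 1))
          = polyArea 4 (wcfg a b c d t) := wPA.symm
        _ ≤ polyArea 4 z := hmax _ hwH hsides
    -- equality extraction at t0
    have hF0 := happ t0 ht0 hQ1nn hQ2nn
    have hle1 : det3 (z 1) (z 2) (z 3) ≤ Real.sqrt (Qg a b t0) := by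
      calc det3 (z 1) (z 2) (z 3) ≤ |det3 (z 1) (z 2) (z 3)| := le_abs_self _
        _ = Real.sqrt (det3 (z 1) (z 2) (z 3) ^ 2) := (Real.sqrt_sq_eq_abs _).symm
        _ = Real.sqrt (Qg a b t0) := by rw [hQ1eq]
    have hle2 : det3 (z 1) (z 3) (z 4) ≤ Real.sqrt (Qg c d t0) := by
      calc det3 (z 1) (z 3) (z 4) ≤ |det3 (z 1) (z 3) (z 4)| := le_abs_self _
        _ = Real.sqrt (det3 (z 1) (z 3) (z 4) ^ 2) := (Real.sqrt_sq_eq_abs _).symm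
        _ = Real.sqrt (Qg c d t0) := by rw [hQ2eq]
    have hB1 : Real.arctan (det3 (z 1) (z 2) (z 3) / (a + b + t0 + 1))
        ≤ Real.arctan (Real.sqrt (Qg a b t0) / (a + b + t0 + 1)) :=
      Real.arctan_strictMono.monotone ((div_le_div_iff_of_pos_right hD1).mpr hle1)
    have hB2 : Real.arctan (det3 (z 1) (z 3) (z 4) / (t0 + c + d + 1))
        ≤ Real.arctan (Real.sqrt (Qg c d t0) / (t0 + c + d + 1)) :=
      Real.arctan_strictMono.monotone ((div_le_div_iff_of_pos_right hD2).mpr hle2)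
    have e1 : Real.arctan (det3 (z 1) (z 2) (z 3) / (a + b + t0 + 1))
        = Real.arctan (Real.sqrt (Qg a b t0) / (a + b + t0 + 1)) := by
      apply le_antisymm hB1
      rw [hPA] at hF0
      linarith
    have e2 : Real.arctan (det3 (z 1) (z 3) (z 4) / (t0 + c + d + 1))
        = Real.arctan (Real.sqrt (Qg c d t0) / (t0 + c + d + 1)) := by
      apply le_antisymm hB2
      rw [hPA] at hF0
      linarith
    have hP1 : det3 (z 1) (z 2) (z 3) = Real.sqrt (Qg a b t0) := by
      have h := Real.arctan_injective e1
      rw [div_eq_div_iff (ne_of_gt hD1) (ne_of_gt hD1)] at h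
      exact mul_right_cancel₀ (ne_of_gt hD1) h
    have hP2 : det3 (z 1) (z 3) (z 4) = Real.sqrt (Qg c d t0) := by
      have h := Real.arctan_injective e2
      rw [div_eq_div_iff (ne_of_gt hD2) (ne_of_gt hD2)] at h
      exact mul_right_cancel₀ (ne_of_gt hD2) h
    -- derive the criticality relation
    have hRel : (a + b - 1 - t0) * det3 (z 1) (z 3) (z 4)
        + (c + d - 1 - t0) * det3 (z 1) (z 2) (z 3) = 0 := by
      rcases eq_or_lt_of_le hQ1nn with hQ10 | hQ1p
      · rcases eq_or_lt_of_le hQ2nn with hQ20 | hQ2p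
        · -- both degenerate triangles
          rw [hP1, hP2, ← hQ10, ← hQ20, Real.sqrt_zero]
          ring
        · -- Q1 = 0 < Q2 : contradiction
          exfalso
          apply boundary_not_max a b c d t0 ha hb hc hd ht0 hQ10.symm hQ2p
          intro t h1 h2 h3
          have := happ t h1 h2 h3
          rw [hPA, hP1, hP2, ← hQ10, Real.sqrt_zero, zero_div, Real.arctan_zero] at this
          linarith
      · rcases eq_or_lt_of_le hQ2nn with hQ20 | hQ2p
        · -- Q2 = 0 < Q1 : contradiction (swapped)
          exfalso
          apply boundary_not_max c d a b t0 hc hd ha hb ht0 hQ20.symm hQ1p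
          intro t h1 h2 h3
          have hpa := happ t h1 h3 h2
          rw [hPA, hP1, hP2, ← hQ20, Real.sqrt_zero, zero_div, Real.arctan_zero] at hpa
          rw [show c+d+t+1 = t+c+d+1 by ring, show t+a+b+1 = a+b+t+1 by ring,
            show t0+a+b+1 = a+b+t0+1 by ring]
          linarith
        · -- interior: use the derivative
          have hcrit := interior_crit a b c d t0 ha hb hc hd ht0 hQ1p hQ2p (by
            intro t h1 h2 h3
            have := happ t h1 h2 h3
            rw [hPA, hP1, hP2] at this
            linarith)
          rw [hP1, hP2]
          linarith [hcrit]
    -- conclude via the determinant identity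
    apply partA
    have hkey := key_det (z 1) (z 2) (z 3) (z 4) hz1.1 hz3.1
    rw [← hadef, ← hbdef, ← hcdef, ← hddef, ← ht0def] at hkey
    have h1t0 : (1 + t0) ≠ 0 := by positivity
    apply mul_left_cancel₀ h1t0
    rw [hkey, mul_zero]
    linarith [hRel]
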